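/- Let X be a compact metric space and f : X → X a continuous map. Let U be a trapping region and A = Inv(U) the associated attractor. Then Inv⁺(X \ U) = {x ∈ X : ω(x) ∩ A = ∅}; in particular Inv⁺(X \ U) is compact, forward invariant, and backward invariant, and it depends only on A and not on the choice of trapping region U with A = Inv(U). Moreover, if f is surjective, then f(Inv⁺(X \ U)) = Inv⁺(X \ U). -/

import Mathlib

open Set

/-- The maximal invariant set in `U`: the union of all subsets `S ⊆ U` with `f '' S = S`. -/
def MaxInv {Y : Type*} (f : Y → Y) (U : Set Y) : Set Y :=
  ⋃₀ {S : Set Y | S ⊆ U ∧ f '' S = S}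

/-- The maximal forward invariant set in `U`: the union of all subsets `S ⊆ U`
with `f '' S ⊆ S`. -/
def MaxInvPlus {Y : Type*} (f : Y → Y) (U : Set Y) : Set Y :=
  ⋃₀ {S : Set Y | S ⊆ U ∧ f '' S ⊆ S}

/-- The omega-limit set `ω(U) = ⋂_{n ≥ 0} cl (⋃_{m ≥ n} f^[m] '' U)`. -/
def OmegaLim {Y : Type*} [TopologicalSpace Y] (f : Y → Y) (U : Set Y) : Set Y :=
  ⋂ n : ℕ, closure (⋃ m ≥ n, f^[m] '' U)

/-- The alpha-limit set `α(U) = ⋂_{n ≥ 0} cl (⋃_{m ≥ n} (f^[m]) ⁻¹' U)`. -/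
def AlphaLim {Y : Type*} [TopologicalSpace Y] (f : Y → Y) (U : Set Y) : Set Y :=
  ⋂ n : ℕ, closure (⋃ m ≥ n, f^[m] ⁻¹' U)

/-- A trapping region: a forward invariant set `U` with `f^[n] '' cl U ⊆ int U`
for some `n ≥ 1`. -/
def IsTrappingRegion {Y : Type*} [TopologicalSpace Y] (f : Y → Y) (U : Set Y) : Prop :=
  f '' U ⊆ U ∧ ∃ n : ℕ, 1 ≤ n ∧ f^[n] '' closure U ⊆ interior U

/-- An attractor: `A = Inv(U)` for some trapping region `U`. -/
def IsAttractor {Y : Type*} [TopologicalSpace Y] (f : Y → Y) (A : Set Y) : Prop :=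
  ∃ U : Set Y, IsTrappingRegion f U ∧ A = MaxInv f U

/-- An attracting neighborhood: `ω(U) ⊆ int U`. -/
def IsAttractingNbhd {Y : Type*} [TopologicalSpace Y] (f : Y → Y) (U : Set Y) : Prop :=
  OmegaLim f U ⊆ interior U

/-- A repelling region: a backward invariant set `U` with `(f^[n]) ⁻¹' cl U ⊆ int U`
for some `n ≥ 1`. -/
def IsRepellingRegion {Y : Type*} [TopologicalSpace Y] (f : Y → Y) (U : Set Y) : Prop :=
  f ⁻¹' U ⊆ U ∧ ∃ n : ℕ, 1 ≤ n ∧ f^[n] ⁻¹' closure U ⊆ interior U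

/-- A repeller: `R = Inv⁺(U)` for some repelling region `U`. -/
def IsRepeller {Y : Type*} [TopologicalSpace Y] (f : Y → Y) (R : Set Y) : Prop :=
  ∃ U : Set Y, IsRepellingRegion f U ∧ R = MaxInvPlus f U

/-- A repelling neighborhood: `α(U) ⊆ int U`. -/
def IsRepellingNbhd {Y : Type*} [TopologicalSpace Y] (f : Y → Y) (U : Set Y) : Prop :=
  AlphaLim f U ⊆ interior U

/-- A backward orbit: a sequence `γ : ℕ → Y` with `f (γ (k+1)) = γ k` for all `k`.
A backward orbit through `x` additionally satisfies `γ 0 = x`. -/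
def IsBackwardOrbit {Y : Type*} (f : Y → Y) (γ : ℕ → Y) : Prop :=
  ∀ k : ℕ, f (γ (k + 1)) = γ k

/-- The orbital alpha-limit set `α_o(γ) = ⋂_{n ≥ 0} cl {γ m : m ≥ n}`. -/
def OrbAlpha {Y : Type*} [TopologicalSpace Y] (γ : ℕ → Y) : Set Y :=
  ⋂ n : ℕ, closure (γ '' {m : ℕ | n ≤ m})

/-- The dual repeller of an attractor `A`: `A* = {x : ω(x) ∩ A = ∅}`. -/
def DualRepeller {Y : Type*} [TopologicalSpace Y] (f : Y → Y) (A : Set Y) : Set Y :=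
  {x : Y | OmegaLim f {x} ∩ A = ∅}

/-- The dual attractor of a repeller `R`:
`R* = {x : ∃ backward orbit γ through x with α_o(γ) ∩ R = ∅}`. -/
def DualAttractor {Y : Type*} [TopologicalSpace Y] (f : Y → Y) (R : Set Y) : Set Y :=
  {x : Y | ∃ γ : ℕ → Y, γ 0 = x ∧ IsBackwardOrbit f γ ∧ OrbAlpha γ ∩ R = ∅}

section Aux
variable {X : Type*} [MetricSpace X] [CompactSpace X] {f : X → X}

lemma iter_mem {S : Set X} (hS : f '' S ⊆ S) {x : X} (hx : x ∈ S) :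
    ∀ n, f^[n] x ∈ S := by
  intro n
  induction n with
  | zero => simpa
  | succ n ih => rw [Function.iterate_succ_apply']; exact hS ⟨_, ih, rfl⟩

lemma maxInvPlus_compl_eq (f : X → X) (U : Set X) :
    MaxInvPlus f Uᶜ = {x | ∀ n, f^[n] x ∉ U} := by
  ext x
  constructor
  · rintro ⟨S, ⟨hSU, hSf⟩, hxS⟩ n
    exact hSU (iter_mem hSf hxS n)
  · intro h
    refine ⟨{y | ∀ n, f^[n] y ∉ U}, ⟨fun y hy => hy 0, ?_⟩, h⟩
    rintro y ⟨z, hz, rfl⟩ n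
    have := hz (n + 1)
    rwa [Function.iterate_succ_apply] at this

lemma maxInv_subset (f : X → X) (U : Set X) : MaxInv f U ⊆ U := by
  rintro x ⟨S, ⟨hSU, _⟩, hx⟩; exact hSU hx

lemma image_maxInv (f : X → X) (U : Set X) : f '' MaxInv f U = MaxInv f U := by
  apply Subset.antisymm
  · rintro _ ⟨x, ⟨S, ⟨hSU, hSf⟩, hx⟩, rfl⟩
    exact ⟨S, ⟨hSU, hSf⟩, hSf.le ⟨x, hx, rfl⟩⟩
  · rintro x ⟨S, ⟨hSU, hSf⟩, hx⟩
    have : x ∈ f '' S := hSf.ge hx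
    obtain ⟨y, hy, rfl⟩ := this
    exact ⟨y, ⟨S, ⟨hSU, hSf⟩, hy⟩, rfl⟩

lemma iterate_image_eq {S : Set X} (h : f '' S = S) : ∀ N, f^[N] '' S = S := by
  intro N
  induction N with
  | zero => simp
  | succ N ih => rw [Function.iterate_succ', image_comp, ih, h]

lemma img_closure (hf : Continuous f) (S : Set X) :
    f '' closure S = closure (f '' S) := by
  apply Subset.antisymm (image_closure_subset_closure_image hf)
  exact closure_minimal (image_mono subset_closure)
    ((isClosed_closure.isCompact.image hf).isClosed)

end Aux

section Aux2
set_option linter.unusedSectionVars false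
variable {X : Type*} [MetricSpace X] [CompactSpace X] {f : X → X}

/-- Tail of an orbit from time `n`. -/
private def tl (f : X → X) (x : X) (n : ℕ) : Set X := ⋃ m ≥ n, f^[m] '' ({x} : Set X)

lemma omegaLim_singleton (f : X → X) (x : X) :
    OmegaLim f ({x} : Set X) = ⋂ n, closure (tl f x n) := rfl

lemma mem_tl {x : X} {n m : ℕ} (h : n ≤ m) : f^[m] x ∈ tl f x n := by
  exact mem_iUnion₂.2 ⟨m, h, ⟨x, rfl, rfl⟩⟩

lemma tl_anti {x : X} : Antitone (tl f x) := by
  intro a b hab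
  exact iUnion₂_mono' fun m hm => ⟨m, le_trans hab hm, le_rfl⟩

lemma image_tl (x : X) (n : ℕ) : f '' tl f x n = tl f x (n + 1) := by
  ext y
  simp only [tl, mem_image, mem_iUnion, image_singleton, mem_singleton_iff, exists_prop]
  constructor
  · rintro ⟨z, ⟨m, hm, rfl⟩, rfl⟩
    exact ⟨m + 1, by omega, (Function.iterate_succ_apply' f m x).symm⟩
  · rintro ⟨m, hm, rfl⟩
    obtain ⟨k, rfl⟩ : ∃ k, m = k + 1 := ⟨m - 1, by omega⟩
    exact ⟨f^[k] x, ⟨k, by omega, rfl⟩, (Function.iterate_succ_apply' f k x).symm⟩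

lemma image_closure_tl (hf : Continuous f) (x : X) (n : ℕ) :
    f '' closure (tl f x n) = closure (tl f x (n + 1)) := by
  rw [img_closure hf, image_tl]

lemma omega_nonempty (hf : Continuous f) (x : X) : (OmegaLim f ({x} : Set X)).Nonempty := by
  rw [omegaLim_singleton]
  refine IsCompact.nonempty_iInter_of_directed_nonempty_isCompact_isClosed _
    (Antitone.directed_ge fun a b hab => closure_mono (tl_anti hab))
    (fun n => ⟨f^[n] x, subset_closure (mem_tl le_rfl)⟩)
    (fun n => isClosed_closure.isCompact) (fun n => isClosed_closure)

lemma image_omega (hf : Continuous f) (x : X) :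
    f '' OmegaLim f ({x} : Set X) = OmegaLim f ({x} : Set X) := by
  rw [omegaLim_singleton]
  apply Subset.antisymm
  · rintro _ ⟨z, hz, rfl⟩
    refine mem_iInter.2 fun n => ?_
    have h1 : f z ∈ f '' closure (tl f x n) := ⟨z, mem_iInter.1 hz n, rfl⟩
    rw [image_closure_tl hf] at h1
    exact closure_mono (tl_anti (Nat.le_succ n)) h1
  · intro y hy
    have key : (⋂ n, f ⁻¹' {y} ∩ closure (tl f x n)).Nonempty := by
      refine IsCompact.nonempty_iInter_of_directed_nonempty_isCompact_isClosed _
        (Antitone.directed_ge fun a b hab =>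
          inter_subset_inter_right _ (closure_mono (tl_anti hab))) (fun n => ?_)
        (fun n => ((IsClosed.preimage hf isClosed_singleton).inter
          isClosed_closure).isCompact)
        (fun n => (IsClosed.preimage hf isClosed_singleton).inter isClosed_closure)
      have h1 : y ∈ closure (tl f x (n + 1)) := mem_iInter.1 hy (n + 1)
      rw [← image_closure_tl hf] at h1
      obtain ⟨z, hz, rfl⟩ := h1
      exact ⟨z, rfl, hz⟩
    obtain ⟨z, hz⟩ := key
    refine ⟨z, mem_iInter.2 fun n => (mem_iInter.1 hz n).2, (mem_iInter.1 hz 0).1⟩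

lemma iterate_image_omega (hf : Continuous f) (x : X) (N : ℕ) :
    f^[N] '' OmegaLim f ({x} : Set X) = OmegaLim f ({x} : Set X) :=
  iterate_image_eq (image_omega hf x) N

lemma omega_subset_closure_tl (x : X) (n : ℕ) :
    OmegaLim f ({x} : Set X) ⊆ closure (tl f x n) := by
  rw [omegaLim_singleton]; exact iInter_subset _ n

end Aux2

section Main
set_option linter.unusedSectionVars false
variable {X : Type*} [MetricSpace X] [CompactSpace X] {f : X → X}

lemma attractor_subset_interior (hf : Continuous f) {U A : Set X}
    (hU : IsTrappingRegion f U) (hA : A = MaxInv f U) : A ⊆ interior U := by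
  obtain ⟨hfwd, N, hN1, hN⟩ := hU
  have h1 : f^[N] '' A = A := by rw [hA]; exact iterate_image_eq (image_maxInv f U) N
  calc A = f^[N] '' A := h1.symm
    _ ⊆ f^[N] '' closure U :=
        image_mono ((hA ▸ maxInv_subset f U).trans subset_closure)
    _ ⊆ interior U := hN

lemma key_eq (hf : Continuous f) {U A : Set X}
    (hU : IsTrappingRegion f U) (hA : A = MaxInv f U) :
    MaxInvPlus f Uᶜ = DualRepeller f A := by
  obtain ⟨hfwd, N, hN1, hN⟩ := hU
  rw [maxInvPlus_compl_eq]
  ext x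
  simp only [mem_setOf_eq, DualRepeller]
  constructor
  · intro h
    apply eq_empty_iff_forall_notMem.2
    rintro y ⟨hy1, hy2⟩
    have hsub : OmegaLim f ({x} : Set X) ⊆ (interior U)ᶜ := by
      refine (omega_subset_closure_tl x 0).trans
        (closure_minimal ?_ isOpen_interior.isClosed_compl)
      rintro z hz
      simp only [tl, mem_iUnion, image_singleton, mem_singleton_iff, exists_prop] at hz
      obtain ⟨m, -, rfl⟩ := hz
      exact fun hmem => h m (interior_subset hmem)
    exact hsub hy1 (attractor_subset_interior hf ⟨hfwd, N, hN1, hN⟩ hA hy2)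
  · intro h
    by_contra hc
    push_neg at hc
    obtain ⟨k, hk⟩ := hc
    have htail : tl f x k ⊆ U := by
      rintro z hz
      simp only [tl, mem_iUnion, image_singleton, mem_singleton_iff, exists_prop] at hz
      obtain ⟨m, hm, rfl⟩ := hz
      have hmk : f^[m] x = f^[m - k] (f^[k] x) := by
        rw [← Function.iterate_add_apply]; congr 1; omega
      rw [hmk]
      exact iter_mem hfwd hk _
    have hω1 : OmegaLim f ({x} : Set X) ⊆ closure U :=
      (omega_subset_closure_tl x k).trans (closure_mono htail)
    have hω2 : OmegaLim f ({x} : Set X) ⊆ U := by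
      intro y hy
      have hy' : y ∈ f^[N] '' OmegaLim f ({x} : Set X) := by
        rw [iterate_image_omega hf]; exact hy
      obtain ⟨z, hz, rfl⟩ := hy'
      exact interior_subset (hN ⟨z, hω1 hz, rfl⟩)
    have hωA : OmegaLim f ({x} : Set X) ⊆ A := by
      rw [hA]
      intro y hy
      exact ⟨OmegaLim f ({x} : Set X), ⟨hω2, image_omega hf x⟩, hy⟩
    obtain ⟨y, hy⟩ := omega_nonempty hf x
    have hmem : y ∈ OmegaLim f ({x} : Set X) ∩ A := ⟨hy, hωA hy⟩
    rw [h] at hmem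
    exact hmem

end Main

/-- Properties of the dual repeller `Inv⁺(X \ U)` of an attractor. -/
theorem dual_repeller_properties
    {X : Type*} [MetricSpace X] [CompactSpace X]
    (f : X → X) (hf : Continuous f) (U A : Set X)
    (hU : IsTrappingRegion f U) (hA : A = MaxInv f U) :
    MaxInvPlus f Uᶜ = DualRepeller f A ∧
    IsCompact (MaxInvPlus f Uᶜ) ∧
    f '' MaxInvPlus f Uᶜ ⊆ MaxInvPlus f Uᶜ ∧
    f ⁻¹' MaxInvPlus f Uᶜ ⊆ MaxInvPlus f Uᶜ ∧
    (∀ U' : Set X, IsTrappingRegion f U' → A = MaxInv f U' →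
      MaxInvPlus f U'ᶜ = MaxInvPlus f Uᶜ) ∧
    (Function.Surjective f → f '' MaxInvPlus f Uᶜ = MaxInvPlus f Uᶜ) := by
  obtain ⟨hfwd, N, hN1, hN⟩ := hU
  have hUt : IsTrappingRegion f U := ⟨hfwd, N, hN1, hN⟩
  have heq := key_eq hf hUt hA
  have hset := maxInvPlus_compl_eq f U
  have h3 : f '' MaxInvPlus f Uᶜ ⊆ MaxInvPlus f Uᶜ := by
    rintro _ ⟨x, hx, rfl⟩
    rw [hset] at hx ⊢
    intro n
    rw [← Function.iterate_succ_apply]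
    exact hx (n + 1)
  have h4 : f ⁻¹' MaxInvPlus f Uᶜ ⊆ MaxInvPlus f Uᶜ := by
    intro x hx
    rw [hset] at hx ⊢
    intro n
    cases n with
    | zero =>
      intro hxU
      exact hx 0 (show f^[0] (f x) ∈ U from hfwd ⟨x, hxU, rfl⟩)
    | succ n => rw [Function.iterate_succ_apply]; exact hx n
  refine ⟨heq, ?_, h3, h4, ?_, ?_⟩
  · have hcl : MaxInvPlus f Uᶜ = ⋂ n, f^[n] ⁻¹' (interior U)ᶜ := by
      rw [hset]; ext x
      simp only [mem_setOf_eq, mem_iInter, mem_preimage, mem_compl_iff]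
      constructor
      · intro h n hmem; exact h n (interior_subset hmem)
      · intro h n hmem
        apply h (N + n)
        rw [Function.iterate_add_apply]
        exact hN ⟨f^[n] x, subset_closure hmem, rfl⟩
    rw [hcl]
    exact (isClosed_iInter fun n =>
      (isOpen_interior.isClosed_compl).preimage (hf.iterate n)).isCompact
  · intro U' hU' hA'
    rw [key_eq hf hU' hA', heq]
  · intro hsurj
    refine Subset.antisymm h3 fun x hx => ?_
    obtain ⟨y, rfl⟩ := hsurj x
    exact ⟨y, h4 hx, rfl⟩
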